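/- If s₁ ∈ 𝔠 and s₂ ∈ 𝔠, then the pointwise product s₁·s₂ belongs to 𝔠. -/

import Mathlib

noncomputable section

/-- The open upper half-plane `ℂ₊`. -/
def upperHalf : Set ℂ := {z : ℂ | 0 < z.im}

/-- The sector `{z : ε ≤ arg z ≤ π − ε}`. -/
def sector (ε : ℝ) : Set ℂ := {z : ℂ | ε ≤ Complex.arg z ∧ Complex.arg z ≤ Real.pi - ε}

/-- The filter describing `|z| → ∞` within the sector `{ε ≤ arg z ≤ π − ε}`. -/
def sectorAtInfty (ε : ℝ) : Filter ℂ :=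
  (Filter.comap (fun z : ℂ => ‖z‖) Filter.atTop) ⊓ Filter.principal (sector ε)

/-- The class `𝔠` of Livšic functions: holomorphic maps `s : ℂ₊ → 𝔻` with `s(i) = 0` such that
for every unimodular `θ`, `|z|·|s(z) − θ| → ∞` as `|z| → ∞` in every sector
`{ε ≤ arg z ≤ π − ε}`, `ε > 0`. -/
def MemLivsicClass (s : ℂ → ℂ) : Prop :=
  DifferentiableOn ℂ s upperHalf ∧
  (∀ z ∈ upperHalf, ‖s z‖ < 1) ∧
  s Complex.I = 0 ∧
  ∀ θ : ℂ, ‖θ‖ = 1 → ∀ ε : ℝ, 0 < ε →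
    Filter.Tendsto (fun z => ‖z‖ * ‖s z - θ‖) (sectorAtInfty ε)
      Filter.atTop

/-- The class `𝔖` of characteristic functions: the functions of the form
`S(z) = (s(z) − κ)/(κ̄ s(z) − 1)` on `ℂ₊` with `s ∈ 𝔠` and `κ ∈ 𝔻`. -/
def MemCharClass (S : ℂ → ℂ) : Prop :=
  ∃ (s : ℂ → ℂ) (κ : ℂ), MemLivsicClass s ∧ ‖κ‖ < 1 ∧
    ∀ z ∈ upperHalf, S z = (s z - κ) / ((starRingEnd ℂ) κ * s z - 1)

section LivsicHelpers
open Complex Filter Metric Set ComplexConjugate Topology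

lemma isOpen_upperHalf : IsOpen upperHalf := isOpen_lt continuous_const Complex.continuous_im

lemma normSq_id1 (a b : ℂ) : Complex.normSq (1 - conj b * a) - Complex.normSq (a - b)
    = (1 - Complex.normSq a) * (1 - Complex.normSq b) := by
  simp only [Complex.normSq_apply, Complex.sub_re, Complex.sub_im, Complex.mul_re, Complex.mul_im,
    Complex.conj_re, Complex.conj_im, Complex.one_re, Complex.one_im]
  ring

lemma normSq_id2 (z w : ℂ) : Complex.normSq (z - conj w) - Complex.normSq (z - w)
    = 4 * z.im * w.im := by
  simp only [Complex.normSq_apply, Complex.sub_re, Complex.sub_im, Complex.mul_re, Complex.mul_im,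
    Complex.conj_re, Complex.conj_im, Complex.one_re, Complex.one_im]
  ring

lemma den_ne_zero {b v : ℂ} (hb : ‖b‖ < 1) (hv : ‖v‖ < 1) :
    (1 : ℂ) - conj b * v ≠ 0 := by
  intro h
  have h1 : ‖conj b * v‖ < 1 := by
    rw [norm_mul, Complex.norm_conj]
    nlinarith [norm_nonneg b, norm_nonneg v]
  have : (1 : ℂ) = conj b * v := by linear_combination h
  rw [← this] at h1
  simp at h1

lemma abs_sub_lt_abs_one_sub {b v : ℂ} (hb : ‖b‖ < 1) (hv : ‖v‖ < 1) :
    ‖v - b‖ < ‖1 - conj b * v‖ := by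
  have h1 : Complex.normSq (1 - conj b * v) - Complex.normSq (v - b)
      = (1 - Complex.normSq v) * (1 - Complex.normSq b) := normSq_id1 v b
  have hv2 : Complex.normSq v < 1 := by rw [Complex.normSq_eq_norm_sq]; nlinarith [norm_nonneg v]
  have hb2 : Complex.normSq b < 1 := by rw [Complex.normSq_eq_norm_sq]; nlinarith [norm_nonneg b]
  have h2 : Complex.normSq (v - b) < Complex.normSq (1 - conj b * v) := by nlinarith
  rw [← Complex.sq_norm, ← Complex.sq_norm] at h2
  nlinarith [norm_nonneg (v - b), norm_nonneg (1 - conj b * v)]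

/-- Schwarz–Pick inequality for holomorphic maps from the upper half-plane to the unit disk. -/
lemma schwarz_pick {f : ℂ → ℂ} (hd : DifferentiableOn ℂ f upperHalf)
    (hb : ∀ z ∈ upperHalf, ‖f z‖ < 1) {z w : ℂ} (hz : z ∈ upperHalf)
    (hw : w ∈ upperHalf) :
    ‖f z - f w‖ * ‖z - conj w‖ ≤
      ‖1 - conj (f w) * f z‖ * ‖z - w‖ := by
  have hwim : 0 < w.im := hw
  have hzim : 0 < z.im := hz
  have hbb : ‖f w‖ < 1 := hb w hw
  -- the Cayley-type map from the disk to the half-plane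
  have hmem : ∀ u : ℂ, ‖u‖ < 1 → ((w - conj w * u) / (1 - u)) ∈ upperHalf := by
    intro u hu1
    have hne : (1 : ℂ) - u ≠ 0 := by
      intro h
      have : u = 1 := by linear_combination -h
      rw [this] at hu1; simp at hu1
    have hnsq : Complex.normSq u < 1 := by
      rw [Complex.normSq_eq_norm_sq]; nlinarith [norm_nonneg u]
    show 0 < ((w - conj w * u) / (1 - u)).im
    have him : ((w - conj w * u) / (1 - u)).im
        = w.im * (1 - Complex.normSq u) / Complex.normSq (1 - u) := by
      rw [Complex.div_im, div_sub_div_same]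
      congr 1
      simp only [Complex.normSq_apply, Complex.sub_re, Complex.sub_im, Complex.mul_re,
        Complex.mul_im, Complex.conj_re, Complex.conj_im, Complex.one_re, Complex.one_im]
      ring
    rw [him]
    exact div_pos (mul_pos hwim (by linarith)) (Complex.normSq_pos.mpr hne)
  -- the composed map g : 𝔻 → 𝔻
  set g : ℂ → ℂ := fun u =>
    (f ((w - conj w * u) / (1 - u)) - f w) / (1 - conj (f w) * f ((w - conj w * u) / (1 - u)))
    with hgdef
  have habsball : ∀ u : ℂ, u ∈ ball (0:ℂ) 1 → ‖u‖ < 1 := by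
    intro u hu; simpa using mem_ball_zero_iff.mp hu
  have hgmaps : MapsTo g (ball (0:ℂ) 1) (ball (0:ℂ) 1) := by
    intro u hu
    have hu1 := habsball u hu
    have hv : ‖f ((w - conj w * u) / (1 - u))‖ < 1 := hb _ (hmem u hu1)
    have hlt := abs_sub_lt_abs_one_sub hbb hv
    have hdpos : 0 < ‖1 - conj (f w) * f ((w - conj w * u) / (1 - u))‖ :=
      norm_pos_iff.mpr (den_ne_zero hbb hv)
    rw [mem_ball_zero_iff, hgdef]
    simp only [norm_div]
    rw [div_lt_one hdpos]
    exact hlt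
  have hgdiff : DifferentiableOn ℂ g (ball (0:ℂ) 1) := by
    intro u hu
    have hu1 := habsball u hu
    have hne : (1 : ℂ) - u ≠ 0 := by
      intro h
      have : u = 1 := by linear_combination -h
      rw [this] at hu1; simp at hu1
    have hCd : DifferentiableAt ℂ (fun u : ℂ => (w - conj w * u) / (1 - u)) u := by
      apply DifferentiableAt.div
      · fun_prop
      · fun_prop
      · exact hne
    have hfd : DifferentiableAt ℂ f ((w - conj w * u) / (1 - u)) :=
      hd.differentiableAt (isOpen_upperHalf.mem_nhds (hmem u hu1))
    have hF : DifferentiableAt ℂ (fun u : ℂ => f ((w - conj w * u) / (1 - u))) u :=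
      hfd.comp u hCd
    have hv : ‖f ((w - conj w * u) / (1 - u))‖ < 1 := hb _ (hmem u hu1)
    exact ((hF.sub (differentiableAt_const _)).div
      ((differentiableAt_const _).sub ((differentiableAt_const _).mul hF))
      (den_ne_zero hbb hv)).differentiableWithinAt
  have hg0 : g 0 = 0 := by
    rw [hgdef]
    simp
  -- now apply the Schwarz lemma at u₀ = (z - w)/(z - conj w)
  have hzw' : z - conj w ≠ 0 := by
    intro h
    have : (z - conj w).im = 0 := by rw [h]; simp
    simp only [Complex.sub_im, Complex.conj_im] at this
    linarith
  have hww : w - conj w ≠ 0 := by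
    intro h
    have : (w - conj w).im = 0 := by rw [h]; simp
    simp only [Complex.sub_im, Complex.conj_im] at this
    linarith
  have habsu : ‖(z - w) / (z - conj w)‖ < 1 := by
    rw [norm_div, div_lt_one (norm_pos_iff.mpr hzw')]
    have h2 : Complex.normSq (z - w) < Complex.normSq (z - conj w) := by
      have := normSq_id2 z w
      nlinarith
    rw [← Complex.sq_norm, ← Complex.sq_norm] at h2
    nlinarith [norm_nonneg (z - w), norm_nonneg (z - conj w)]
  have hCu : (w - conj w * ((z - w) / (z - conj w))) / (1 - (z - w) / (z - conj w)) = z := by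
    have h1u : (1 : ℂ) - (z - w) / (z - conj w) ≠ 0 := by
      rw [sub_ne_zero]
      intro h
      have := (div_eq_one_iff_eq hzw').mp h.symm
      apply hww
      linear_combination -this
    rw [div_eq_iff h1u]
    field_simp
    ring
  have hsch := Complex.norm_le_norm_of_mapsTo_ball hgdiff (hgmaps.mono_right ball_subset_closedBall) hg0 habsu
  rw [hgdef] at hsch
  simp only [hCu] at hsch
  rw [norm_div, norm_div] at hsch
  have hvz : ‖f z‖ < 1 := hb z hz
  have hdpos : 0 < ‖1 - conj (f w) * f z‖ := norm_pos_iff.mpr (den_ne_zero hbb hvz)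
  rw [div_le_div_iff₀ hdpos (norm_pos_iff.mpr hzw')] at hsch
  linarith

/-- Julia-type inequality derived from Schwarz–Pick. -/
lemma julia_aux {f : ℂ → ℂ} (hd : DifferentiableOn ℂ f upperHalf)
    (hb : ∀ z ∈ upperHalf, ‖f z‖ < 1) {z w : ℂ} (hz : z ∈ upperHalf)
    (hw : w ∈ upperHalf) :
    Complex.normSq (1 - conj (f w) * f z) * (4 * z.im * w.im) ≤
      (1 - Complex.normSq (f z)) * (1 - Complex.normSq (f w)) * Complex.normSq (z - conj w) := by
  have hsp := schwarz_pick hd hb hz hw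
  have h2 := pow_le_pow_left₀ (by positivity) hsp 2
  rw [mul_pow, mul_pow, Complex.sq_norm, Complex.sq_norm, Complex.sq_norm, Complex.sq_norm] at h2
  have i1 := normSq_id1 (f z) (f w)
  have i2 := normSq_id2 z w
  rw [← i1, ← i2]
  nlinarith [h2]

lemma sin_sector {ε x : ℝ} (h0 : 0 < ε) (h1 : ε ≤ x) (h2 : x ≤ Real.pi - ε) :
    Real.sin ε ≤ Real.sin x := by
  have hepi : ε ≤ Real.pi / 2 := by linarith [h1.trans h2]
  have hpi := Real.pi_pos
  rcases le_or_gt x (Real.pi / 2) with hx | hx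
  · exact Real.strictMonoOn_sin.monotoneOn ⟨by linarith, hepi⟩ ⟨by linarith, hx⟩ h1
  · calc Real.sin ε ≤ Real.sin (Real.pi - x) :=
          Real.strictMonoOn_sin.monotoneOn ⟨by linarith, hepi⟩ ⟨by linarith, by linarith⟩
            (by linarith)
      _ = Real.sin x := Real.sin_pi_sub x

lemma sector_facts {ε : ℝ} {z : ℂ} (hε : 0 < ε) (hz : z ∈ sector ε) :
    0 < ‖z‖ ∧ Real.sin ε * ‖z‖ ≤ z.im ∧ z ∈ upperHalf ∧ 0 < Real.sin ε := by
  obtain ⟨h1, h2⟩ := hz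
  have hz0 : z ≠ 0 := by
    intro h
    rw [h, Complex.arg_zero] at h1
    linarith
  have habs : 0 < ‖z‖ := norm_pos_iff.mpr hz0
  have hsin : Real.sin ε ≤ Real.sin (Complex.arg z) := sin_sector hε h1 h2
  have hsinε : 0 < Real.sin ε := by
    apply Real.sin_pos_of_pos_of_lt_pi hε
    have := h1.trans h2
    linarith [Real.pi_pos]
  have him : z.im = Real.sin (Complex.arg z) * ‖z‖ := by
    rw [Complex.sin_arg]
    field_simp
  have h3 : Real.sin ε * ‖z‖ ≤ z.im := by
    rw [him]
    exact mul_le_mul_of_nonneg_right hsin habs.le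
  exact ⟨habs, h3, lt_of_lt_of_le (by positivity) h3, hsinε⟩

end LivsicHelpers

open Complex Filter Metric Set ComplexConjugate Topology

set_option maxHeartbeats 1600000 in
/-- The class `𝔠` is closed under pointwise multiplication. -/
theorem statement15 (s₁ s₂ : ℂ → ℂ) (h₁ : MemLivsicClass s₁) (h₂ : MemLivsicClass s₂) :
    MemLivsicClass (fun z => s₁ z * s₂ z) := by
  obtain ⟨hd₁, hb₁, hi₁, ht₁⟩ := h₁
  obtain ⟨hd₂, hb₂, hi₂, ht₂⟩ := h₂
  refine ⟨hd₁.mul hd₂, ?_, by simp [hi₁], ?_⟩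
  · intro z hzu
    have a1 := hb₁ z hzu; have a2 := hb₂ z hzu
    simp only [norm_mul]
    nlinarith [norm_nonneg (s₁ z), norm_nonneg (s₂ z)]
  · intro θ hθ ε hε
    by_contra hcon
    rw [Filter.tendsto_atTop] at hcon
    push_neg at hcon
    obtain ⟨M, hM⟩ := hcon
    have hex : ∀ n : ℕ, ∃ z, z ∈ sector ε ∧ (n:ℝ) ≤ ‖z‖ ∧
        ‖z‖ * ‖s₁ z * s₂ z - θ‖ < M := by
      intro n
      have h1 : ∀ᶠ z in sectorAtInfty ε, z ∈ sector ε :=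
        (Filter.eventually_principal.mpr fun z hz => hz).filter_mono inf_le_right
      have h2 : ∀ᶠ z in sectorAtInfty ε, (n:ℝ) ≤ ‖z‖ :=
        Filter.le_def.mp inf_le_left _ (Filter.preimage_mem_comap (Filter.mem_atTop _))
      obtain ⟨z, hz⟩ := (hM.and_eventually (h1.and h2)).exists
      exact ⟨z, hz.2.1, hz.2.2, hz.1⟩
    choose zs hzs1 hzs2 hzs3 using hex
    have hMpos : 0 < M := lt_of_le_of_lt (by positivity) (hzs3 0)
    have hfacts := fun n => sector_facts hε (hzs1 n)
    have hsinε : 0 < Real.sin ε := (hfacts 0).2.2.2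
    have hkey : ∀ n, ‖zs n‖ * (1 - ‖s₁ (zs n)‖) ≤ M := by
      intro n
      have hup := (hfacts n).2.2.1
      have h6 : ‖s₁ (zs n) * s₂ (zs n)‖ ≤ ‖s₁ (zs n)‖ := by
        rw [norm_mul]
        nlinarith [norm_nonneg (s₁ (zs n)), norm_nonneg (s₂ (zs n)),
          hb₂ _ hup, hb₁ _ hup]
      have h7 : ‖θ‖ - ‖s₁ (zs n) * s₂ (zs n)‖ ≤
          ‖θ - s₁ (zs n) * s₂ (zs n)‖ := by
        have := norm_sub_norm_le θ (s₁ (zs n) * s₂ (zs n))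
        simpa using this
      have h5 : 1 - ‖s₁ (zs n)‖ ≤ ‖s₁ (zs n) * s₂ (zs n) - θ‖ := by
        rw [norm_sub_rev]
        linarith [hθ ▸ h7]
      calc ‖zs n‖ * (1 - ‖s₁ (zs n)‖)
          ≤ ‖zs n‖ * ‖s₁ (zs n) * s₂ (zs n) - θ‖ :=
            mul_le_mul_of_nonneg_left h5 (norm_nonneg _)
        _ ≤ M := (hzs3 n).le
    have hcb : ∀ n, s₁ (zs n) ∈ Metric.closedBall (0:ℂ) 1 := fun n => by
      rw [Metric.mem_closedBall, dist_zero_right]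
      exact (hb₁ _ ((hfacts n).2.2.1)).le
    obtain ⟨θ₁, hθ₁mem, φ, hφmono, hφtend⟩ := (isCompact_closedBall (0:ℂ) 1).tendsto_subseq hcb
    have habsφ : Tendsto (fun m => ‖zs (φ m)‖) atTop atTop := by
      apply tendsto_atTop_mono (fun m => ?_) tendsto_natCast_atTop_atTop
      calc (m:ℝ) ≤ (φ m : ℝ) := by exact_mod_cast hφmono.le_apply
        _ ≤ ‖zs (φ m)‖ := hzs2 (φ m)
    have habsθ₁ : ‖θ₁‖ = 1 := by
      have hup : ‖θ₁‖ ≤ 1 := by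
        have := hθ₁mem
        rw [Metric.mem_closedBall, dist_zero_right] at this
        exact this
      have habscont : Tendsto (fun m => ‖s₁ (zs (φ m))‖) atTop
          (𝓝 (‖θ₁‖)) := (continuous_norm.continuousAt.tendsto).comp hφtend
      have hlo : Tendsto (fun m => 1 - M / ‖zs (φ m)‖) atTop (𝓝 (1 - 0)) :=
        tendsto_const_nhds.sub (tendsto_const_nhds.div_atTop habsφ)
      have hle : ∀ m, 1 - M / ‖zs (φ m)‖ ≤ ‖s₁ (zs (φ m))‖ := by
        intro m
        have h0 := (hfacts (φ m)).1
        have h9 : 1 - ‖s₁ (zs (φ m))‖ ≤ M / ‖zs (φ m)‖ :=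
          (le_div_iff₀ h0).mpr (by nlinarith [hkey (φ m)])
        linarith
      have := le_of_tendsto_of_tendsto' hlo habscont hle
      linarith
    have hseq : Tendsto (fun m => zs (φ m)) atTop (sectorAtInfty ε) := by
      apply Filter.tendsto_inf.mpr
      constructor
      · exact Filter.tendsto_comap_iff.mpr habsφ
      · exact Filter.tendsto_principal.mpr (Filter.Eventually.of_forall fun m => hzs1 (φ m))
    have hbig := (ht₁ θ₁ habsθ₁ ε hε).comp hseq
    have hbound : ∀ m, ‖zs (φ m)‖ * ‖s₁ (zs (φ m)) - θ₁‖ ≤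
        M / Real.sin ε ^ 2 := by
      intro m
      obtain ⟨hZpos, hZim, hZup, -⟩ := hfacts (φ m)
      have haa : ‖s₁ (zs (φ m))‖ < 1 := hb₁ _ hZup
      have hZim0 : 0 < (zs (φ m)).im := hZup
      have hAr : ∀ n, Complex.normSq (1 - conj (s₁ (zs (φ n))) * s₁ (zs (φ m))) ≤
          ((1 - Complex.normSq (s₁ (zs (φ m)))) * (2*M) / (4 * (zs (φ m)).im * Real.sin ε)) *
            (‖zs (φ m)‖ / ‖zs (φ n)‖ + 1)^2 := by
        intro n
        obtain ⟨hWpos, hWim, hWup, -⟩ := hfacts (φ n)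
        have hbW : ‖s₁ (zs (φ n))‖ < 1 := hb₁ _ hWup
        have hbW0 : 0 ≤ ‖s₁ (zs (φ n))‖ := norm_nonneg _
        have haa0 : 0 ≤ ‖s₁ (zs (φ m))‖ := norm_nonneg _
        have hJ := julia_aux hd₁ hb₁ hZup hWup
        have htr : ‖zs (φ m) - conj (zs (φ n))‖ ≤
            ‖zs (φ m)‖ + ‖zs (φ n)‖ := by
          have := norm_sub_le (zs (φ m)) ((starRingEnd ℂ) (zs (φ n)))
          simpa [Complex.norm_conj] using this
        have hkn := hkey (φ n)
        have hWim0 : 0 < (zs (φ n)).im := hWup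
        have hnaq := Complex.normSq_eq_norm_sq (s₁ (zs (φ m)))
        have hnbq := Complex.normSq_eq_norm_sq (s₁ (zs (φ n)))
        have hPq := Complex.sq_norm (zs (φ m) - conj (zs (φ n)))
        have hX0 : 0 ≤ Complex.normSq (1 - conj (s₁ (zs (φ n))) * s₁ (zs (φ m))) :=
          Complex.normSq_nonneg _
        set X := Complex.normSq (1 - conj (s₁ (zs (φ n))) * s₁ (zs (φ m))) with hXd
        set na := Complex.normSq (s₁ (zs (φ m))) with hnad
        set nb := Complex.normSq (s₁ (zs (φ n))) with hnbd
        set P := Complex.normSq (zs (φ m) - conj (zs (φ n))) with hPd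
        set Am := ‖s₁ (zs (φ m))‖ with hAmd
        set An := ‖s₁ (zs (φ n))‖ with hAnd
        set t := ‖zs (φ n)‖ with htd
        set Za := ‖zs (φ m)‖ with hZad
        set zi := (zs (φ m)).im with hzid
        set wi := (zs (φ n)).im with hwid
        clear_value X na nb P Am An t Za zi wi
        -- now everything is scalar arithmetic
        have hna1 : na ≤ 1 := by rw [hnaq]; nlinarith
        have hnb1 : nb ≤ 1 := by rw [hnbq]; nlinarith
        have hna0 : 0 ≤ na := hnad ▸ Complex.normSq_nonneg _
        have hnb0 : 0 ≤ nb := hnbd ▸ Complex.normSq_nonneg _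
        have hP2 : P ≤ (Za + t)^2 := by
          rw [← hPq]
          nlinarith [norm_nonneg (zs (φ m) - conj (zs (φ n)))]
        have h1nb : t * (1 - nb) ≤ 2*M := by
          rw [hnbq]
          nlinarith [mul_le_mul_of_nonneg_right hkn (show (0:ℝ) ≤ 1 + An by linarith), hMpos]
        have hgoal : X * (4*zi*Real.sin ε*t^2) ≤ (1-na)*(2*M)*(Za+t)^2 := by
          have C1 : X*(4*zi)*(Real.sin ε*t)*t ≤ X*(4*zi)*wi*t := by
            refine mul_le_mul_of_nonneg_right ?_ hWpos.le
            exact mul_le_mul_of_nonneg_left hWim (by positivity)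
          have C2 : X*(4*zi*wi)*t ≤ ((1-na)*(1-nb)*P)*t :=
            mul_le_mul_of_nonneg_right hJ hWpos.le
          have C3 : (1-na)*(1-nb)*P*t ≤ (1-na)*(1-nb)*(Za+t)^2*t := by
            refine mul_le_mul_of_nonneg_right ?_ hWpos.le
            exact mul_le_mul_of_nonneg_left hP2 (mul_nonneg (by linarith) (by linarith))
          have C4 : ((1-na)*(Za+t)^2)*(t*(1-nb)) ≤ ((1-na)*(Za+t)^2)*(2*M) :=
            mul_le_mul_of_nonneg_left h1nb (mul_nonneg (by linarith) (by positivity))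
          nlinarith [C1, C2, C3, C4]
        have hfrac : (Za/t + 1)^2 = (Za+t)^2/t^2 := by
          field_simp
        rw [hfrac, div_mul_div_comm, le_div_iff₀ (by positivity)]
        nlinarith [hgoal]
      have hAl : Tendsto (fun n => Complex.normSq (1 - conj (s₁ (zs (φ n))) * s₁ (zs (φ m))))
          atTop (𝓝 (Complex.normSq (1 - conj θ₁ * s₁ (zs (φ m))))) := by
        have hc : Continuous fun x : ℂ => Complex.normSq (1 - conj x * s₁ (zs (φ m))) :=
          Complex.continuous_normSq.comp
            (continuous_const.sub (Complex.continuous_conj.mul continuous_const))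
        exact (hc.continuousAt.tendsto).comp hφtend
      have hrl : Tendsto (fun n =>
          ((1 - Complex.normSq (s₁ (zs (φ m)))) * (2*M) / (4 * (zs (φ m)).im * Real.sin ε)) *
            (‖zs (φ m)‖ / ‖zs (φ n)‖ + 1)^2) atTop
          (𝓝 (((1 - Complex.normSq (s₁ (zs (φ m)))) * (2*M) /
            (4 * (zs (φ m)).im * Real.sin ε)) * (0 + 1)^2)) := by
        apply Tendsto.const_mul
        exact ((tendsto_const_nhds.div_atTop habsφ).add tendsto_const_nhds).pow 2
      have hlim := le_of_tendsto_of_tendsto' hAl hrl hAr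
      simp only [zero_add, one_pow, mul_one] at hlim
      have hnθ : Complex.normSq θ₁ = 1 := by
        rw [Complex.normSq_eq_norm_sq, habsθ₁]; norm_num
      have h10 : Complex.normSq (1 - conj θ₁ * s₁ (zs (φ m))) =
          Complex.normSq (θ₁ - s₁ (zs (φ m))) := by
        have hθu : conj θ₁ * θ₁ = 1 := by
          rw [mul_comm, Complex.mul_conj, hnθ]; norm_num
        have h11 : (1:ℂ) - conj θ₁ * s₁ (zs (φ m)) = conj θ₁ * (θ₁ - s₁ (zs (φ m))) := by
          rw [mul_sub, hθu]
        rw [h11, map_mul, Complex.normSq_conj, hnθ, one_mul]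
      rw [h10] at hlim
      have hDsq : Complex.normSq (θ₁ - s₁ (zs (φ m))) = ‖θ₁ - s₁ (zs (φ m))‖^2 :=
        (Complex.sq_norm _).symm
      have h1aD : 1 - ‖s₁ (zs (φ m))‖ ≤ ‖θ₁ - s₁ (zs (φ m))‖ := by
        have := norm_sub_norm_le θ₁ (s₁ (zs (φ m)))
        rw [habsθ₁] at this
        exact this
      have habs_comm : ‖s₁ (zs (φ m)) - θ₁‖ = ‖θ₁ - s₁ (zs (φ m))‖ :=
        norm_sub_rev _ _
      have hnaq := Complex.normSq_eq_norm_sq (s₁ (zs (φ m)))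
      rw [hDsq] at hlim
      set D := ‖θ₁ - s₁ (zs (φ m))‖ with hDd
      set na := Complex.normSq (s₁ (zs (φ m))) with hnad
      set Am := ‖s₁ (zs (φ m))‖ with hAmd
      set Za := ‖zs (φ m)‖ with hZad
      set zi := (zs (φ m)).im with hzid
      clear_value D na Am Za zi
      have hD0 : 0 ≤ D := hDd ▸ norm_nonneg _
      have hAm0 : 0 ≤ Am := hAmd ▸ norm_nonneg _
      have hc0le : D^2 * (4 * zi * Real.sin ε) ≤ (1 - na) * (2*M) := by
        rw [le_div_iff₀ (by positivity)] at hlim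
        linarith
      have h2D : 1 - na ≤ 2 * D := by
        rw [hnaq]
        nlinarith
      rw [habs_comm]
      rcases eq_or_lt_of_le hD0 with hD0' | hDpos
      · rw [← hD0', mul_zero]
        positivity
      · have hDM : D * (zi * Real.sin ε) ≤ M := by
          nlinarith [hc0le, h2D, hDpos, hMpos, hZim0, hsinε]
        rw [le_div_iff₀ (by positivity : (0:ℝ) < Real.sin ε ^ 2)]
        nlinarith [hDM, mul_le_mul_of_nonneg_left hZim
          (show (0:ℝ) ≤ D * Real.sin ε by positivity)]
    obtain ⟨m, hm⟩ := (hbig.eventually_gt_atTop (M / Real.sin ε ^ 2)).exists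
    exact absurd (hbound m) (not_le.mpr hm)
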